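/- Every $\mathbf{m}$-perfect coloring of the infinite path graph (2-regular graph on $\mathbb{Z}$) with a finite color set is periodic: there exists $\ell \in \mathbb{N}$, $\ell \geq 1$, such that $\Gamma(i) = \Gamma(i + \ell)$ for all $i \in \mathbb{Z}$. -/

import Mathlib

open Finset

lemma pc_count {C : Type*} [Fintype C] [DecidableEq C]
    (m : Matrix C C ℕ) (Γ : ℤ → C)
    (hperf : ∀ i : ℤ, ∀ j : C,
      ((({i - 1, i + 1} : Finset ℤ)).filter (fun w => Γ w = j)).card = m (Γ i) j)
    (i : ℤ) (j : C) :
    (if Γ (i - 1) = j then 1 else 0) + (if Γ (i + 1) = j then 1 else 0) = m (Γ i) j := by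
  have h := hperf i j
  rw [show ({i - 1, i + 1} : Finset ℤ) = insert (i - 1) {i + 1} from rfl,
    Finset.filter_insert, Finset.filter_singleton] at h
  have hne : i - 1 ≠ i + 1 := by omega
  split_ifs at h ⊢ <;> simp_all [Finset.card_insert_of_notMem]

lemma pc_step {C : Type*} [Fintype C] [DecidableEq C]
    (m : Matrix C C ℕ) (Γ : ℤ → C)
    (hperf : ∀ i : ℤ, ∀ j : C,
      ((({i - 1, i + 1} : Finset ℤ)).filter (fun w => Γ w = j)).card = m (Γ i) j)
    (a b : ℤ) (h0 : Γ a = Γ b) (h1 : Γ (a - 1) = Γ (b - 1)) :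
    Γ (a + 1) = Γ (b + 1) := by
  have key := pc_count m Γ hperf a (Γ (a + 1))
  have hb := pc_count m Γ hperf b (Γ (a + 1))
  rw [h0, ← hb, h1] at key
  clear hb
  split_ifs at key <;> first | omega | simp_all
lemma pc_step_back {C : Type*} [Fintype C] [DecidableEq C]
    (m : Matrix C C ℕ) (Γ : ℤ → C)
    (hperf : ∀ i : ℤ, ∀ j : C,
      ((({i - 1, i + 1} : Finset ℤ)).filter (fun w => Γ w = j)).card = m (Γ i) j)
    (a b : ℤ) (h0 : Γ a = Γ b) (h1 : Γ (a + 1) = Γ (b + 1)) :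
    Γ (a - 1) = Γ (b - 1) := by
  have key := pc_count m Γ hperf a (Γ (a - 1))
  have hb := pc_count m Γ hperf b (Γ (a - 1))
  rw [h0, ← hb, h1] at key
  clear hb
  split_ifs at key <;> first | omega | simp_all

/-- Every perfect coloring of the infinite path graph (vertex set `ℤ`,
neighbors `i ± 1`) with a finite color set is periodic. -/
theorem perfect_coloring_of_path_is_periodic
    {C : Type*} [Fintype C] [DecidableEq C]
    (m : Matrix C C ℕ) (Γ : ℤ → C)
    (hperf : ∀ i : ℤ, ∀ j : C,
      ((({i - 1, i + 1} : Finset ℤ)).filter (fun w => Γ w = j)).card = m (Γ i) j) :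
    ∃ ℓ : ℕ, 1 ≤ ℓ ∧ ∀ i : ℤ, Γ (i + ℓ) = Γ i := by
  have main : ∀ p q : ℕ, p < q → Γ p = Γ q → Γ (p + 1) = Γ (q + 1) →
      ∃ ℓ : ℕ, 1 ≤ ℓ ∧ ∀ i : ℤ, Γ (i + ℓ) = Γ i := by
    intro p q hlt h0 h1
    have key : ∀ k : ℤ, Γ (p + k) = Γ (q + k) ∧ Γ (p + k + 1) = Γ (q + k + 1) := by
      intro k
      induction k using Int.induction_on with
      | zero => simpa using ⟨h0, h1⟩
      | succ n ih =>
        refine ⟨by simpa [add_assoc] using ih.2, ?_⟩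
        have := pc_step m Γ hperf (p + n + 1) (q + n + 1)
          (by simpa [add_assoc] using ih.2) (by simpa using ih.1)
        convert this using 2 <;> push_cast <;> ring
      | pred n ih =>
        refine ⟨?_, by have := ih.1; convert this using 2 <;> push_cast <;> ring⟩
        have := pc_step_back m Γ hperf (p + -n) (q + -n)
          (by simpa using ih.1) (by have := ih.2; convert this using 2 <;> push_cast <;> ring)
        convert this using 2 <;> push_cast <;> ring
    refine ⟨q - p, by omega, fun i => ?_⟩
    have h := (key (i - p)).1
    have hq : ((q - p : ℕ) : ℤ) = (q : ℤ) - p := by omega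
    rw [show (p : ℤ) + (i - p) = i by ring,
      show (q : ℤ) + (i - p) = i + ((q : ℤ) - p) by ring] at h
    rw [hq]
    exact h.symm
  obtain ⟨p, q, hne, hpq⟩ :=
    Finite.exists_ne_map_eq_of_infinite (fun n : ℕ => (Γ n, Γ (n + 1)))
  simp only [Prod.mk.injEq] at hpq
  rcases Ne.lt_or_gt hne with hlt | hlt
  · exact main p q hlt hpq.1 hpq.2
  · exact main q p hlt hpq.1.symm hpq.2.symm
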